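/- Let u ≥ 2 and let l₁,…,l_u be non-negative integers with M = max{l_j}. The minimal K ∈ ℕ for which there exists a matrix K ∈ {0,1}^{u×K} satisfying (i) the i-th row sums to l_i for all i, and (ii) each column sum lies in {1,…,u−1}, is K = max{M, ⌈(l₁+⋯+l_u)/(u−1)⌉}. -/
import Mathlib

open Finset

lemma count_mod_ge {K S j : ℕ} (hj : j < K) (hKS : K ≤ S) :
    1 ≤ ((Finset.Ico 0 S).filter (fun t => t % K = j)).card :=
  Finset.card_pos.mpr ⟨j, by simp [Nat.mod_eq_of_lt hj, lt_of_lt_of_le hj hKS]⟩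

lemma count_mod_le {K S j c : ℕ} (hK : 0 < K) (hS : S ≤ K * c) :
    ((Finset.Ico 0 S).filter (fun t => t % K = j)).card ≤ c := by
  have h1 : ((Finset.Ico 0 S).filter (fun t => t % K = j))
      ⊆ (Finset.range c).image (fun m => j + m * K) := by
    intro t ht
    simp only [Finset.mem_filter, Finset.mem_Ico] at ht
    obtain ⟨⟨-, htS⟩, hmod⟩ := ht
    simp only [Finset.mem_image, Finset.mem_range]
    refine ⟨t / K, (Nat.div_lt_iff_lt_mul hK).2 (htS.trans_le (by rw [mul_comm] at hS; exact hS)), ?_⟩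
    rw [← hmod, Nat.mod_add_div']
  exact (Finset.card_le_card h1).trans ((Finset.card_image_le).trans (by simp))

lemma sum_card_filter_Ico (p : ℕ → ℕ) (hp : Monotone p) (P : ℕ → Prop) [DecidablePred P] (n : ℕ) :
    ∑ i ∈ Finset.range n, ((Finset.Ico (p i) (p (i+1))).filter P).card
      = ((Finset.Ico (p 0) (p n)).filter P).card := by
  induction n with
  | zero => simp
  | succ n ih =>
    rw [Finset.sum_range_succ, ih, ← Finset.card_union_of_disjoint
        (Finset.disjoint_filter_filter (Finset.Ico_disjoint_Ico_consecutive _ _ _)),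
        ← Finset.filter_union, Finset.Ico_union_Ico_eq_Ico (hp (Nat.zero_le n)) (hp (Nat.le_succ n))]

theorem stmt_5 {u : ℕ} (hu : 2 ≤ u) (l : Fin u → ℕ) :
    IsLeast
      {K : ℕ | ∃ A : Fin u → Fin K → ℕ,
        (∀ i j, A i j ≤ 1) ∧
        (∀ i, ∑ j, A i j = l i) ∧
        (∀ j, 1 ≤ ∑ i, A i j ∧ ∑ i, A i j ≤ u - 1)}
      (max (Finset.univ.sup l) ⌈((∑ i, l i : ℚ)) / ((u : ℚ) - 1)⌉₊) := by
  have hQ : (∑ i : Fin u, ((l i : ℚ))) = (((∑ i, l i : ℕ)) : ℚ) := by push_cast; rfl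
  rw [hQ]
  set S : ℕ := ∑ i, l i with hS
  set K : ℕ := max (Finset.univ.sup l) ⌈((S : ℚ)) / ((u : ℚ) - 1)⌉₊ with hKdef
  have hu1 : (1 : ℚ) ≤ (u : ℚ) - 1 := by
    have : (2 : ℚ) ≤ (u : ℚ) := by exact_mod_cast hu
    linarith
  have hu1' : (0 : ℚ) < (u : ℚ) - 1 := by linarith
  have hcast : ((u - 1 : ℕ) : ℚ) = (u : ℚ) - 1 := by
    have := Nat.cast_sub (show 1 ≤ u by omega) (R := ℚ)
    simpa using this
  have hlK : ∀ i, l i ≤ K := fun i =>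
    le_trans (Finset.le_sup (Finset.mem_univ i)) (le_max_left _ _)
  have hKS : K ≤ S := by
    apply max_le
    · exact Finset.sup_le fun i _ => Finset.single_le_sum (fun _ _ => Nat.zero_le _) (Finset.mem_univ i)
    · rw [Nat.ceil_le]
      exact div_le_self (by positivity) hu1
  have hSK : S ≤ K * (u - 1) := by
    have h1 : (S : ℚ) / ((u : ℚ) - 1) ≤ (K : ℚ) := by
      have h0 : (⌈((S : ℚ)) / ((u : ℚ) - 1)⌉₊ : ℕ) ≤ K := le_max_right _ _
      calc (S : ℚ) / ((u : ℚ) - 1) ≤ (⌈((S : ℚ)) / ((u : ℚ) - 1)⌉₊ : ℚ) := Nat.le_ceil _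
        _ ≤ (K : ℚ) := by exact_mod_cast h0
    have h2 : (S : ℚ) ≤ (K : ℚ) * ((u : ℚ) - 1) := by
      rwa [div_le_iff₀ hu1'] at h1
    rw [← hcast] at h2
    exact_mod_cast h2
  constructor
  · -- membership : construct the matrix
    rcases Nat.eq_zero_or_pos K with hK0 | hK
    · have hl0 : ∀ i, l i = 0 := fun i => by have := hlK i; omega
      refine ⟨fun _ _ => 0, fun i j => by norm_num, fun i => by simp [hl0 i], fun j => ?_⟩
      exact Fin.elim0 (Fin.cast hK0 j)
    · set l' : ℕ → ℕ := fun n => if h : n < u then l ⟨n, h⟩ else 0 with hl'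
      set p : ℕ → ℕ := fun n => ∑ i ∈ Finset.range n, l' i with hp
      have hpmono : Monotone p := fun a b hab =>
        Finset.sum_le_sum_of_subset (Finset.range_subset_range.2 hab)
      have hpsucc : ∀ n, p (n + 1) = p n + l' n := fun n => Finset.sum_range_succ _ _
      have hp0 : p 0 = 0 := Finset.sum_range_zero _
      have hpu : p u = S := by
        show ∑ i ∈ Finset.range u, l' i = S
        rw [hS, ← Fin.sum_univ_eq_sum_range]
        exact Finset.sum_congr rfl fun i _ => by simp [hl', i.isLt]
      refine ⟨fun i j => ((Finset.Ico (p i) (p (i+1))).filter (fun t => t % K = (j : ℕ))).card,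
        ?_, ?_, ?_⟩
      · -- entries ≤ 1
        intro i j
        rw [Finset.card_le_one]
        intro a ha b hb
        simp only [Finset.mem_filter, Finset.mem_Ico] at ha hb
        have hlen : p ((i : ℕ) + 1) = p i + l i := by
          rw [hpsucc]; congr 1; simp [hl', i.isLt]
        rcases le_total a b with h | h
        · have hdvd : K ∣ b - a := (Nat.modEq_iff_dvd' h).1 (ha.2.trans hb.2.symm)
          have hlt : b - a < K := by have := hlK i; omega
          have := Nat.eq_zero_of_dvd_of_lt hdvd
          omega
        · have hdvd : K ∣ a - b := (Nat.modEq_iff_dvd' h).1 (hb.2.trans ha.2.symm)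
          have hlt : a - b < K := by have := hlK i; omega
          have := Nat.eq_zero_of_dvd_of_lt hdvd
          omega
      · -- row sums
        intro i
        have hfib := Finset.card_eq_sum_card_fiberwise
          (f := fun t => (⟨t % K, Nat.mod_lt t hK⟩ : Fin K))
          (s := Finset.Ico (p i) (p ((i : ℕ)+1))) (t := Finset.univ)
          (fun x _ => Finset.mem_univ _)
        have hcard : (Finset.Ico (p (i : ℕ)) (p ((i : ℕ)+1))).card = l i := by
          rw [Nat.card_Ico, hpsucc]; simp [hl', i.isLt]
        rw [← hcard, hfib]
        refine Finset.sum_congr rfl fun j _ => ?_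
        refine congrArg Finset.card (Finset.filter_congr fun t _ => ?_)
        simp [Fin.ext_iff]
      · -- column sums
        intro j
        have hsum : ∑ i : Fin u, ((Finset.Ico (p (i : ℕ)) (p ((i : ℕ)+1))).filter
            (fun t => t % K = (j : ℕ))).card
            = ((Finset.Ico 0 S).filter (fun t => t % K = (j : ℕ))).card := by
          rw [Fin.sum_univ_eq_sum_range
            (fun m => ((Finset.Ico (p m) (p (m+1))).filter (fun t => t % K = (j : ℕ))).card) u,
            sum_card_filter_Ico p hpmono _ u, hp0, hpu]
        rw [hsum]
        exact ⟨count_mod_ge j.isLt hKS, count_mod_le hK hSK⟩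
  · -- lower bound
    rintro K' ⟨A, hA1, hA2, hA3⟩
    apply max_le
    · refine Finset.sup_le fun i _ => ?_
      calc l i = ∑ j, A i j := (hA2 i).symm
        _ ≤ ∑ _j : Fin K', 1 := Finset.sum_le_sum fun j _ => hA1 i j
        _ = K' := by simp
    · rw [Nat.ceil_le, div_le_iff₀ hu1']
      have h1 : S ≤ K' * (u - 1) := by
        calc S = ∑ i, ∑ j, A i j := Finset.sum_congr rfl fun i _ => (hA2 i).symm
          _ = ∑ j, ∑ i, A i j := Finset.sum_comm
          _ ≤ ∑ _j : Fin K', (u - 1) := Finset.sum_le_sum fun j _ => (hA3 j).2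
          _ = K' * (u - 1) := by simp [mul_comm]
      calc (S : ℚ) ≤ ((K' * (u - 1) : ℕ) : ℚ) := by exact_mod_cast h1
        _ = (K' : ℚ) * ((u : ℚ) - 1) := by push_cast [Nat.cast_sub (show 1 ≤ u by omega)]; ring
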